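/- Existence of performatively multicalibrated predictors: For any outcome-performative distribution map D, any finite collection C of functions c : X × [0,1] → [−1,1] that are measurable in x and continuous in the prediction coordinate p, and any ε > 0, there exists a randomized predictor f that is ε-performatively multicalibrated with respect to C. -/

import Mathlib

open MeasureTheory ProbabilityTheory Set

set_option maxHeartbeats 2000000 in
theorem exists_performatively_multicalibrated_predictor
    {X : Type*} [MeasurableSpace X]
    (Dx : Measure X) [IsProbabilityMeasure Dx]
    (Dy : Kernel (X × ℝ) ℝ) [IsMarkovKernel Dy]
    (hDy : ∀ z : X × ℝ, Dy z (Icc (0:ℝ) 1) = 1)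
    (C : Finset (X → ℝ → ℝ))
    (hC_meas : ∀ c ∈ C, ∀ p : ℝ, Measurable fun x => c x p)
    (hC_cont : ∀ c ∈ C, ∀ x : X, ContinuousOn (c x) (Icc (0:ℝ) 1))
    (hC_bdd : ∀ c ∈ C, ∀ x : X, ∀ p ∈ Icc (0:ℝ) 1, c x p ∈ Icc (-1:ℝ) 1)
    (ε : ℝ) (hε : 0 < ε) :
    ∃ f : Kernel X ℝ, IsMarkovKernel f ∧ (∀ x, f x (Icc (0:ℝ) 1) = 1) ∧
      ∀ c ∈ C,
        |∫ x, ∫ p, ∫ y, c x p * (y - p) ∂(Dy (x, p)) ∂(f x) ∂Dx| ≤ ε := by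
  classical
  -- the conditional mean function
  set m : X → ℝ → ℝ := fun x p => ∫ y, y ∂(Dy (x, p)) with hm_def
  have hm_meas : ∀ q : ℝ, Measurable fun x => m x q := by
    intro q
    have hκ : Measurable fun x : X => (x, q) := measurable_id.prodMk measurable_const
    have h := MeasureTheory.StronglyMeasurable.integral_kernel_prod_right
      (κ := Dy.comap (fun x => (x, q)) hκ)
      (f := fun (_ : X) (y : ℝ) => y) (measurable_snd.stronglyMeasurable)
    have heq : (fun x : X => m x q) = fun x => ∫ y, y ∂((Dy.comap (fun x => (x, q)) hκ) x) := by
      ext x; rw [Kernel.comap_apply]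
    rw [heq]; exact h.measurable
  -- a.e. facts about Dy
  have hae : ∀ z : X × ℝ, ∀ᵐ y ∂(Dy z), y ∈ Icc (0:ℝ) 1 := by
    intro z
    rw [ae_iff]
    have : {y : ℝ | ¬ y ∈ Icc (0:ℝ) 1} = (Icc (0:ℝ) 1)ᶜ := rfl
    rw [this, measure_compl measurableSet_Icc (measure_ne_top _ _), hDy z]
    simp
  have hint : ∀ z : X × ℝ, Integrable (fun y : ℝ => y) (Dy z) := by
    intro z
    refine (integrable_const (1:ℝ)).mono' measurable_id.aestronglyMeasurable ?_
    filter_upwards [hae z] with y hy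
    rw [Real.norm_eq_abs, abs_le]
    exact ⟨le_trans (by norm_num) hy.1, hy.2⟩
  have hm0 : ∀ x p, 0 ≤ m x p := by
    intro x p
    refine integral_nonneg_of_ae ?_
    filter_upwards [hae (x, p)] with y hy using hy.1
  have hm1 : ∀ x p, m x p ≤ 1 := by
    intro x p
    have : m x p ≤ ∫ _ : ℝ, (1:ℝ) ∂(Dy (x, p)) := by
      refine integral_mono_ae (hint (x, p)) (integrable_const 1) ?_
      filter_upwards [hae (x, p)] with y hy using hy.2
    simpa using this
  -- grid adequacy predicate
  set P : ℕ → X → Prop := fun n x => ∀ c ∈ C, ∀ i : ℕ, i < n + 1 →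
      |c x ((i:ℝ)/((n:ℝ)+1)) - c x (((i:ℝ)+1)/((n:ℝ)+1))| ≤ ε with hP_def
  have hPmeas : ∀ n, MeasurableSet {x | P n x} := by
    intro n
    have : {x | P n x} = ⋂ (c ∈ C), ⋂ (i ∈ Finset.range (n+1)),
        {x | |c x ((i:ℝ)/((n:ℝ)+1)) - c x (((i:ℝ)+1)/((n:ℝ)+1))| ≤ ε} := by
      ext x
      simp only [hP_def, mem_setOf_eq, mem_iInter, Finset.mem_range]

    rw [this]
    refine MeasurableSet.biInter C.countable_toSet fun c hc => ?_
    refine MeasurableSet.biInter (Finset.range (n+1)).countable_toSet fun i _ => ?_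
    exact measurableSet_le
      (((hC_meas c hc _).sub (hC_meas c hc _)).abs) measurable_const
  have hPex : ∀ x, ∃ n, P n x := by
    intro x
    have hex : ∀ c : X → ℝ → ℝ, ∃ Nc : ℕ, c ∈ C → ∀ n ≥ Nc, ∀ i : ℕ, i < n + 1 →
        |c x ((i:ℝ)/((n:ℝ)+1)) - c x (((i:ℝ)+1)/((n:ℝ)+1))| ≤ ε := by
      intro c
      by_cases hc : c ∈ C
      · have hu : UniformContinuousOn (c x) (Icc (0:ℝ) 1) :=
          isCompact_Icc.uniformContinuousOn_of_continuous (hC_cont c hc x)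
        rw [Metric.uniformContinuousOn_iff] at hu
        obtain ⟨δ, hδ, hδ'⟩ := hu ε hε
        obtain ⟨Nc, hNc⟩ := exists_nat_one_div_lt hδ
        refine ⟨Nc, fun _ n hn i hi => ?_⟩
        have hn1 : (0:ℝ) < (n:ℝ) + 1 := by positivity
        have hmem1 : (i:ℝ)/((n:ℝ)+1) ∈ Icc (0:ℝ) 1 := by
          constructor
          · positivity
          · rw [div_le_one hn1]
            have : (i:ℝ) ≤ (n:ℝ) := by exact_mod_cast Nat.lt_succ_iff.mp hi
            linarith
        have hmem2 : ((i:ℝ)+1)/((n:ℝ)+1) ∈ Icc (0:ℝ) 1 := by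
          constructor
          · positivity
          · rw [div_le_one hn1]
            have : (i:ℝ) ≤ (n:ℝ) := by exact_mod_cast Nat.lt_succ_iff.mp hi
            linarith
        have hdist : dist ((i:ℝ)/((n:ℝ)+1)) (((i:ℝ)+1)/((n:ℝ)+1)) < δ := by
          rw [Real.dist_eq]
          have : (i:ℝ)/((n:ℝ)+1) - ((i:ℝ)+1)/((n:ℝ)+1) = -(1/((n:ℝ)+1)) := by
            field_simp
            ring
          rw [this, abs_neg, abs_of_pos (by positivity)]
          calc 1/((n:ℝ)+1) ≤ 1/((Nc:ℝ)+1) := by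
                apply one_div_le_one_div_of_le (by positivity)
                have : (Nc:ℝ) ≤ (n:ℝ) := by exact_mod_cast hn
                linarith
            _ < δ := hNc
        have := hδ' _ hmem1 _ hmem2 hdist
        rw [Real.dist_eq] at this
        exact le_of_lt this
      · exact ⟨0, fun h => absurd h hc⟩
    choose Nc hNc using hex
    refine ⟨C.sup Nc, fun c hc i hi => ?_⟩
    exact hNc c hc _ (Finset.le_sup hc) i hi
  -- grid size (opaque, to avoid unfolding `Nat.find`)
  obtain ⟨nn, hnn_meas, hnnP⟩ : ∃ nn : X → ℕ, Measurable nn ∧ ∀ x, P (nn x) x :=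
    ⟨fun x => Nat.find (hPex x), measurable_find _ hPmeas, fun x => Nat.find_spec (hPex x)⟩
  set N : X → ℕ := fun x => nn x + 1 with hN_def
  have hN_meas : Measurable N := hnn_meas.add measurable_const
  have hN_pos : ∀ x, (0:ℝ) < (N x : ℝ) := fun x => by positivity
  -- the crossing index
  have hi_ex : ∀ x, ∃ j : ℕ, m x (((j:ℝ)+1)/((N x : ℝ))) ≤ ((j:ℝ)+1)/((N x : ℝ)) := by
    intro x
    refine ⟨nn x, ?_⟩
    have : ((nn x : ℝ)+1)/((N x : ℝ)) = 1 := by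
      rw [hN_def]; push_cast; field_simp
    rw [this]
    exact hm1 x 1
  obtain ⟨ii, hii_meas, hii_spec, hii_min, hii_le⟩ : ∃ ii : X → ℕ, Measurable ii ∧
      (∀ x, m x (((ii x : ℝ)+1)/((N x : ℝ))) ≤ ((ii x : ℝ)+1)/((N x : ℝ))) ∧
      (∀ x, ∀ j < ii x, ¬ (m x (((j:ℝ)+1)/((N x : ℝ))) ≤ ((j:ℝ)+1)/((N x : ℝ)))) ∧
      (∀ x, ii x ≤ nn x) := by
    refine ⟨fun x => Nat.find (hi_ex x), ?_, fun x => Nat.find_spec (hi_ex x),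
      fun x j hj => Nat.find_min (hi_ex x) hj, fun x => Nat.find_min' (hi_ex x) ?_⟩
    · refine measurable_find _ fun j => ?_
      have : {x | m x (((j:ℝ)+1)/((N x : ℝ))) ≤ ((j:ℝ)+1)/((N x : ℝ))} =
          ⋃ k : ℕ, ({x | N x = k} ∩ {x | m x (((j:ℝ)+1)/((k:ℝ))) ≤ ((j:ℝ)+1)/((k:ℝ))}) := by
        ext x
        simp only [mem_setOf_eq, mem_iUnion, mem_inter_iff]
        constructor
        · intro h; exact ⟨N x, rfl, by simpa using h⟩
        · rintro ⟨k, hk, h⟩; rw [hk]; exact h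
      rw [this]
      refine MeasurableSet.iUnion fun k => (hN_meas (measurableSet_singleton k)).inter ?_
      exact measurableSet_le (hm_meas _) measurable_const
    · have : ((nn x : ℝ)+1)/((N x : ℝ)) = 1 := by
        rw [hN_def]; push_cast; field_simp
      rw [this]; exact hm1 x 1
  have hii_lt : ∀ x, ii x < N x := fun x => Nat.lt_succ_of_le (hii_le x)
  -- grid points
  set p₀ : X → ℝ := fun x => (ii x : ℝ) / (N x : ℝ) with hp₀_def
  set p₁ : X → ℝ := fun x => ((ii x : ℝ) + 1) / (N x : ℝ) with hp₁_def
  have hpair : Measurable fun x => (ii x, N x) := hii_meas.prodMk hN_meas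
  have hp₀_meas : Measurable p₀ :=
    (measurable_of_countable (fun k : ℕ × ℕ => (k.1 : ℝ)/(k.2 : ℝ))).comp hpair
  have hp₁_meas : Measurable p₁ :=
    (measurable_of_countable (fun k : ℕ × ℕ => ((k.1 : ℝ)+1)/(k.2 : ℝ))).comp hpair
  have hp₀_mem : ∀ x, p₀ x ∈ Icc (0:ℝ) 1 := by
    intro x
    constructor
    · positivity
    · rw [hp₀_def, div_le_one (hN_pos x)]
      exact_mod_cast le_of_lt (hii_lt x)
  have hp₁_mem : ∀ x, p₁ x ∈ Icc (0:ℝ) 1 := by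
    intro x
    constructor
    · positivity
    · rw [hp₁_def, div_le_one (hN_pos x)]
      have : (ii x : ℝ) + 1 ≤ (N x : ℝ) := by exact_mod_cast hii_lt x
      linarith
  -- gap values
  set a : X → ℝ := fun x => m x (p₀ x) - p₀ x with ha_def
  set b : X → ℝ := fun x => p₁ x - m x (p₁ x) with hb_def
  have ha_meas : Measurable a := by
    have h : Measurable fun z : X × (ℕ × ℕ) => m z.1 ((z.2.1 : ℝ)/(z.2.2 : ℝ)) -
        ((z.2.1 : ℝ)/(z.2.2 : ℝ)) :=
      measurable_from_prod_countable_left fun k : ℕ × ℕ => by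
        exact (hm_meas ((k.1 : ℝ)/(k.2 : ℝ))).sub
          (measurable_const : Measurable fun _ : X => ((k.1 : ℝ)/(k.2 : ℝ)))
    exact h.comp (measurable_id.prodMk hpair)
  have hb_meas : Measurable b := by
    have h : Measurable fun z : X × (ℕ × ℕ) => ((z.2.1 : ℝ)+1)/(z.2.2 : ℝ) -
        m z.1 (((z.2.1 : ℝ)+1)/(z.2.2 : ℝ)) :=
      measurable_from_prod_countable_left fun k : ℕ × ℕ => by
        exact (measurable_const : Measurable fun _ : X => (((k.1 : ℝ)+1)/(k.2 : ℝ))).sub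
          (hm_meas (((k.1 : ℝ)+1)/(k.2 : ℝ)))
    exact h.comp (measurable_id.prodMk hpair)
  have ha0 : ∀ x, 0 ≤ a x := by
    intro x
    rcases eq_or_ne (ii x) 0 with h0 | h0
    · have hp0 : p₀ x = 0 := by simp [hp₀_def, h0]
      simp only [ha_def, hp0]
      simpa using hm0 x 0
    · obtain ⟨j, hj⟩ := Nat.exists_eq_succ_of_ne_zero h0
      have hlt : j < ii x := by omega
      have := hii_min x j hlt
      push_neg at this
      have hcast : ((j:ℝ)+1) = (ii x : ℝ) := by rw [hj]; push_cast; ring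
      rw [hcast] at this
      simp only [ha_def, hp₀_def]
      linarith
  have hb0 : ∀ x, 0 ≤ b x := by
    intro x
    have := hii_spec x
    simp only [hb_def, hp₁_def]
    linarith
  have ha1 : ∀ x, a x ≤ 1 := by
    intro x
    have := hm1 x (p₀ x)
    have := (hp₀_mem x).1
    simp only [ha_def]; linarith
  have hb1 : ∀ x, b x ≤ 1 := by
    intro x
    have := hm0 x (p₁ x)
    have := (hp₁_mem x).2
    simp only [hb_def]; linarith
  -- mixing weight
  set t : X → ℝ := fun x => b x / (a x + b x) with ht_def
  have ht_meas : Measurable t := hb_meas.div (ha_meas.add hb_meas)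
  have ht0 : ∀ x, 0 ≤ t x := fun x => div_nonneg (hb0 x) (by linarith [ha0 x, hb0 x])
  have ht1 : ∀ x, t x ≤ 1 := by
    intro x
    rcases eq_or_lt_of_le (by linarith [ha0 x, hb0 x] : (0:ℝ) ≤ a x + b x) with h | h
    · rw [ht_def]; simp [← h]
    · rw [ht_def, div_le_one h]; linarith [ha0 x]
  have hkey : ∀ x, t x * a x = (1 - t x) * b x := by
    intro x
    rcases eq_or_lt_of_le (by linarith [ha0 x, hb0 x] : (0:ℝ) ≤ a x + b x) with h | h
    · have ha' : a x = 0 := by linarith [ha0 x, hb0 x]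
      have hb' : b x = 0 := by linarith [ha0 x, hb0 x]
      simp [ha', hb']
    · have hne : a x + b x ≠ 0 := ne_of_gt h
      rw [ht_def]
      field_simp
      ring
  -- the kernel
  set f : Kernel X ℝ := ⟨fun x => ENNReal.ofReal (t x) • Measure.dirac (p₀ x)
      + ENNReal.ofReal (1 - t x) • Measure.dirac (p₁ x), by
    refine Measure.measurable_of_measurable_coe _ fun s hs => ?_
    simp only [Measure.coe_add, Measure.coe_smul, Pi.add_apply, Pi.smul_apply, smul_eq_mul,
      Measure.dirac_apply' _ hs]
    exact ((ENNReal.measurable_ofReal.comp ht_meas).mul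
        ((measurable_const.indicator hs).comp hp₀_meas)).add
      ((ENNReal.measurable_ofReal.comp (measurable_const.sub ht_meas)).mul
        ((measurable_const.indicator hs).comp hp₁_meas))⟩ with hf_def
  have hf_apply : ∀ x, f x = ENNReal.ofReal (t x) • Measure.dirac (p₀ x)
      + ENNReal.ofReal (1 - t x) • Measure.dirac (p₁ x) := fun x => rfl
  have hsum1 : ∀ x, ENNReal.ofReal (t x) + ENNReal.ofReal (1 - t x) = 1 := by
    intro x
    rw [← ENNReal.ofReal_add (ht0 x) (by linarith [ht1 x])]
    norm_num
  have hfmarkov : IsMarkovKernel f := by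
    constructor
    intro x
    constructor
    rw [hf_apply]
    simp only [Measure.coe_add, Measure.coe_smul, Pi.add_apply, Pi.smul_apply, smul_eq_mul,
      measure_univ, mul_one]
    exact hsum1 x
  have hfIcc : ∀ x, f x (Icc (0:ℝ) 1) = 1 := by
    intro x
    rw [hf_apply]
    simp only [Measure.coe_add, Measure.coe_smul, Pi.add_apply, Pi.smul_apply, smul_eq_mul,
      Measure.dirac_apply' _ measurableSet_Icc,
      indicator_of_mem (hp₀_mem x) (1 : ℝ → ENNReal), indicator_of_mem (hp₁_mem x) (1 : ℝ → ENNReal),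
      Pi.one_apply, mul_one]
    exact hsum1 x
  refine ⟨f, hfmarkov, hfIcc, ?_⟩
  intro c hc
  -- pointwise bound
  have hbound : ∀ x, ‖∫ p, ∫ y, c x p * (y - p) ∂(Dy (x, p)) ∂(f x)‖ ≤ ε := by
    intro x
    set Hx : ℝ → ℝ := fun p => ∫ y, c x p * (y - p) ∂(Dy (x, p)) with hHx_def
    have hHval : ∀ p, Hx p = c x p * (m x p - p) := by
      intro p
      simp only [hHx_def]
      rw [integral_const_mul]
      congr 1
      rw [integral_sub (hint (x, p)) (integrable_const p)]
      simp [hm_def]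
    -- integral against the two-point mixture
    have hdint : ∀ (q : ℝ), Integrable Hx (Measure.dirac q) := by
      intro q
      refine (integrable_const (Hx q)).congr ?_
      rw [Filter.EventuallyEq, ae_dirac_eq]
      exact Filter.eventually_pure.mpr rfl
    have hfint : ∫ p, Hx p ∂(f x) = t x * Hx (p₀ x) + (1 - t x) * Hx (p₁ x) := by
      rw [hf_apply]
      rw [integral_add_measure ((hdint _).smul_measure ENNReal.ofReal_ne_top)
        ((hdint _).smul_measure ENNReal.ofReal_ne_top),
        integral_smul_measure, integral_smul_measure, integral_dirac, integral_dirac,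
        ENNReal.toReal_ofReal (ht0 x), ENNReal.toReal_ofReal (by linarith [ht1 x])]
      simp [smul_eq_mul]
    rw [hfint, hHval, hHval]
    have hma : m x (p₀ x) - p₀ x = a x := by rw [ha_def]
    have hmb : m x (p₁ x) - p₁ x = -(b x) := by rw [hb_def]; ring
    rw [hma, hmb]
    have : t x * (c x (p₀ x) * a x) + (1 - t x) * (c x (p₁ x) * -(b x))
        = (t x * a x) * (c x (p₀ x) - c x (p₁ x)) := by
      linear_combination (c x (p₁ x)) * hkey x
    rw [this]
    rw [Real.norm_eq_abs, abs_mul]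
    have hta : |t x * a x| ≤ 1 := by
      rw [abs_of_nonneg (mul_nonneg (ht0 x) (ha0 x))]
      exact mul_le_one₀ (ht1 x) (ha0 x) (ha1 x)
    have hcc : |c x (p₀ x) - c x (p₁ x)| ≤ ε := by
      have := hnnP x c hc (ii x) (Nat.lt_succ_of_le (hii_le x))
      have hcast : ((nn x : ℝ) + 1) = (N x : ℝ) := by rw [hN_def]; push_cast; ring
      rw [hcast] at this
      rw [hp₀_def, hp₁_def]
      exact this
    calc |t x * a x| * |c x (p₀ x) - c x (p₁ x)| ≤ 1 * ε :=
          mul_le_mul hta hcc (abs_nonneg _) one_pos.le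
      _ = ε := one_mul ε
  have := norm_integral_le_of_norm_le_const (μ := Dx)
    (f := fun x => ∫ p, ∫ y, c x p * (y - p) ∂(Dy (x, p)) ∂(f x)) (C := ε)
    (Filter.Eventually.of_forall hbound)
  rw [Real.norm_eq_abs] at this
  simpa using this
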